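/- arXiv:1711.04748 — 2 statements merged into one kernel-verified Lean document; each statement's English description precedes it below -/
import Mathlib

section
/- Let ℓ, k, n be positive integers with ℓ ≤ k/2 and (k−ℓ) dividing n. Then every 2-edge-colouring of the complete k-uniform hypergraph K_n^{(k)} contains a blue-red ℓ-path P with |V(P)| = n − k + 2ℓ, i.e. covering all but exactly k − 2ℓ vertices. -/
/-- The `i`-th edge of a `k`-uniform `ℓ`-cycle of length `m` whose cyclic vertex
ordering is given by `v` on indices `0, …, m*(k-ℓ) - 1`: it consists of the `k`
consecutive vertices at positions `i*(k-ℓ), …, i*(k-ℓ)+k-1` (modulo `m*(k-ℓ)`),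
so that consecutive edges intersect in exactly `ℓ` vertices. -/
def cycEdge (k ℓ m : ℕ) {n : ℕ} (v : ℕ → Fin n) (i : ℕ) : Finset (Fin n) :=
  (Finset.range k).image fun j => v ((i * (k - ℓ) + j) % (m * (k - ℓ)))

/-- The last `ℓ` vertices of the `i`-th edge of the `ℓ`-cycle (they are the first
`ℓ` vertices of the `(i+1)`-st edge): positions `i*(k-ℓ)+(k-ℓ), …, i*(k-ℓ)+k-1`
(modulo `m*(k-ℓ)`).  This is the set `e_i⁺`. -/
def cycPlus (k ℓ m : ℕ) {n : ℕ} (v : ℕ → Fin n) (i : ℕ) : Finset (Fin n) :=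
  (Finset.range ℓ).image fun j => v ((i * (k - ℓ) + (k - ℓ) + j) % (m * (k - ℓ)))

/-- The `j`-th edge of a `k`-uniform `ℓ`-path whose linear vertex ordering is
given by `w`: the `k` consecutive vertices at positions `j*(k-ℓ), …, j*(k-ℓ)+k-1`,
so that consecutive edges intersect in exactly `ℓ` vertices. -/
def pathEdge (k ℓ : ℕ) {n : ℕ} (w : ℕ → Fin n) (j : ℕ) : Finset (Fin n) :=
  (Finset.range k).image fun t => w (j * (k - ℓ) + t)

/-- `S ⊆ Fin n` is the vertex set of a monochromatic `k`-uniform `ℓ`-cycle of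
colour `col` with respect to the `2`-edge-colouring `c`.  This is either a
degenerate cycle (a vertex set of size `k-ℓ`, monochromatic in either colour),
a single edge of colour `col`, or a genuine `ℓ`-cycle with `m ≥ 2` edges, given
by a cyclic ordering `v` of its `m*(k-ℓ)` vertices whose edges
`cycEdge k ℓ m v i` (for `i < m`) all have colour `col`.  (For `m = 2` the two
edges intersect in `2ℓ` vertices, as allowed.) -/
def IsMonoCycle (k ℓ : ℕ) {n : ℕ} (c : Finset (Fin n) → Bool) (col : Bool)
    (S : Finset (Fin n)) : Prop :=
  S.card = k - ℓ ∨
  (S.card = k ∧ c S = col) ∨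
  ∃ m : ℕ, 2 ≤ m ∧ ∃ v : ℕ → Fin n,
    Set.InjOn v (Set.Iio (m * (k - ℓ))) ∧
    S = (Finset.range (m * (k - ℓ))).image v ∧
    ∀ i < m, c (cycEdge k ℓ m v i) = col

/-- `pathEdge` rewritten with an abbreviated step `d = k - ℓ`. -/
lemma pathEdge_eq_image (k ℓ d : ℕ) {n : ℕ} (hd : k - ℓ = d) (w : ℕ → Fin n) (j : ℕ) :
    pathEdge k ℓ w j = (Finset.range k).image fun t => w (j * d + t) := by
  unfold pathEdge; rw [hd]

/-- Two vertex orderings that agree on an edge's positions give the same edge. -/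
lemma image_congr_edge (k d : ℕ) {n : ℕ} (w w' : ℕ → Fin n) (a b : ℕ)
    (h : ∀ t < k, w' (a * d + t) = w (b * d + t)) :
    ((Finset.range k).image fun t => w' (a * d + t)) =
      (Finset.range k).image fun t => w (b * d + t) := by
  apply Finset.image_congr
  intro t ht
  simp only [Finset.coe_range, Set.mem_Iio] at ht
  exact h t ht

/-- Inserting a block of `d` fresh vertices `v 0, …, v (d-1)` at position `p`
into an injective ordering `w`. -/
lemma insert_block (n d ℓ m p : ℕ) (hd0 : 0 < d) (hp : p ≤ m * d + ℓ)
    (w v : ℕ → Fin n)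
    (hinj : Set.InjOn w (Set.Iio (m * d + ℓ)))
    (hbd : ∀ i < m * d + ℓ, (w i : ℕ) < (m + 1) * d)
    (hv1 : ∀ s < d, (m + 1) * d ≤ (v s : ℕ) ∧ (v s : ℕ) < (m + 2) * d)
    (hv2 : ∀ s t, s < d → t < d → v s = v t → s = t) :
    ∃ w' : ℕ → Fin n,
      (∀ i < p, w' i = w i) ∧
      (∀ i, p ≤ i → i < p + d → w' i = v (i - p)) ∧
      (∀ i, p + d ≤ i → w' i = w (i - d)) ∧
      Set.InjOn w' (Set.Iio ((m + 1) * d + ℓ)) ∧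
      (∀ i < (m + 1) * d + ℓ, (w' i : ℕ) < (m + 2) * d) := by
  have e1 : (m + 1) * d = m * d + d := by ring
  have e2 : (m + 2) * d = m * d + 2 * d := by ring
  refine ⟨fun i => if i < p then w i else if i < p + d then v (i - p) else w (i - d),
    ?_, ?_, ?_, ?_, ?_⟩
  · intro i hi; simp [hi]
  · intro i h1 h2; simp only []; rw [if_neg (by omega), if_pos h2]
  · intro i h1; simp only []; rw [if_neg (by omega), if_neg (by omega)]
  · intro a ha b hb hab
    simp only [Set.mem_Iio] at ha hb
    simp only [] at hab
    by_cases ca1 : a < p <;> by_cases cb1 : b < p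
    · exact hinj (by simp only [Set.mem_Iio]; omega) (by simp only [Set.mem_Iio]; omega) (by
        rwa [if_pos ca1, if_pos cb1] at hab)
    · rw [if_pos ca1, if_neg cb1] at hab
      by_cases cb2 : b < p + d
      · rw [if_pos cb2] at hab
        have h1 := hbd a (by omega)
        have h2 := (hv1 (b - p) (by omega)).1
        rw [hab] at h1; omega
      · rw [if_neg cb2] at hab
        have := hinj (by simp only [Set.mem_Iio]; omega)
          (by simp only [Set.mem_Iio]; omega) hab
        omega
    · rw [if_neg ca1, if_pos cb1] at hab
      by_cases ca2 : a < p + d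
      · rw [if_pos ca2] at hab
        have h1 := hbd b (by omega)
        have h2 := (hv1 (a - p) (by omega)).1
        rw [← hab] at h1; omega
      · rw [if_neg ca2] at hab
        have := hinj (by simp only [Set.mem_Iio]; omega)
          (by simp only [Set.mem_Iio]; omega) hab
        omega
    · rw [if_neg ca1, if_neg cb1] at hab
      by_cases ca2 : a < p + d <;> by_cases cb2 : b < p + d
      · rw [if_pos ca2, if_pos cb2] at hab
        have := hv2 (a - p) (b - p) (by omega) (by omega) hab
        omega
      · rw [if_pos ca2, if_neg cb2] at hab
        have h1 := hbd (b - d) (by omega)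
        have h2 := (hv1 (a - p) (by omega)).1
        rw [← hab] at h1; omega
      · rw [if_neg ca2, if_pos cb2] at hab
        have h1 := hbd (a - d) (by omega)
        have h2 := (hv1 (b - p) (by omega)).1
        rw [hab] at h1; omega
      · rw [if_neg ca2, if_neg cb2] at hab
        have := hinj (by simp only [Set.mem_Iio]; omega)
          (by simp only [Set.mem_Iio]; omega) hab
        omega
  · intro i hi
    by_cases c1 : i < p
    · simp only [if_pos c1]; have := hbd i (by omega); omega
    · by_cases c2 : i < p + d
      · simp only [if_neg c1, if_pos c2]
        exact (hv1 (i - p) (by omega)).2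
      · simp only [if_neg c1, if_neg c2]
        have := hbd (i - d) (by omega); omega

/-- The invariant: a blue-red `ℓ`-path with `m` edges whose vertices all have
index below `(m+1)*(k-ℓ)`. -/
def GoodPath (k ℓ n : ℕ) (c : Finset (Fin n) → Bool) (m : ℕ) : Prop :=
  ∃ (m₀ : ℕ) (col : Bool) (w : ℕ → Fin n),
    m₀ ≤ m ∧
    Set.InjOn w (Set.Iio (m * (k - ℓ) + ℓ)) ∧
    (∀ i < m * (k - ℓ) + ℓ, (w i : ℕ) < (m + 1) * (k - ℓ)) ∧
    (∀ j < m₀, c (pathEdge k ℓ w j) = col) ∧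
    (∀ j, m₀ ≤ j → j < m → c (pathEdge k ℓ w j) = !col)

lemma goodPath_zero (ℓ k n : ℕ) (hn : 0 < n) (hℓn : ℓ ≤ n) (hk : 2 * ℓ ≤ k)
    (c : Finset (Fin n) → Bool) : GoodPath k ℓ n c 0 := by
  refine ⟨0, true, fun i => ⟨i % n, Nat.mod_lt _ hn⟩, le_refl _, ?_, ?_, ?_, ?_⟩
  · intro a ha b hb hab
    simp only [Set.mem_Iio, zero_mul, zero_add] at ha hb
    have : a % n = b % n := congrArg Fin.val hab
    rwa [Nat.mod_eq_of_lt (by omega), Nat.mod_eq_of_lt (by omega)] at this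
  · intro i hi
    simp only [zero_mul, zero_add] at hi
    have : i % n = i := Nat.mod_eq_of_lt (by omega)
    simp only [this, one_mul]
    omega
  · intro j hj; omega
  · intro j hj hj'; omega

lemma goodPath_step (ℓ k n : ℕ) (hℓ : 0 < ℓ) (hk : 2 * ℓ ≤ k)
    (c : Finset (Fin n) → Bool) (m : ℕ) (hmn : (m + 2) * (k - ℓ) ≤ n)
    (h : GoodPath k ℓ n c m) : GoodPath k ℓ n c (m + 1) := by
  obtain ⟨m₀, col, w, hm₀, hinj, hbd, hcol1, hcol2⟩ := h
  obtain ⟨d, hd⟩ : ∃ d, k - ℓ = d := ⟨_, rfl⟩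
  have hld : ℓ ≤ d := by omega
  have hd0 : 0 < d := by omega
  have hk2 : k = d + ℓ := by omega
  rw [hd] at hinj hbd hmn
  have e1 : (m + 1) * d = m * d + d := by ring
  have e2 : (m + 2) * d = m * d + 2 * d := by ring
  have pe : ∀ (u : ℕ → Fin n) j, pathEdge k ℓ u j
      = (Finset.range k).image fun t => u (j * d + t) :=
    fun u j => pathEdge_eq_image k ℓ d hd u j
  -- the fresh block
  have hvlt : ∀ s : ℕ, (m + 1) * d + s % d < n := by
    intro s; have := Nat.mod_lt s hd0; omega
  set v : ℕ → Fin n := fun s => ⟨(m + 1) * d + s % d, hvlt s⟩ with hv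
  have hv1 : ∀ s < d, (m + 1) * d ≤ (v s : ℕ) ∧ (v s : ℕ) < (m + 2) * d := by
    intro s hs
    simp only [hv]
    have := Nat.mod_lt s hd0
    omega
  have hv2 : ∀ s t, s < d → t < d → v s = v t → s = t := by
    intro s t hs ht hst
    have := congrArg Fin.val hst
    simp only [hv, Nat.mod_eq_of_lt hs, Nat.mod_eq_of_lt ht] at this
    omega
  have hveq : ∀ s < d, v s = v (s % d) := by
    intro s hs; rw [Nat.mod_eq_of_lt hs]
  -- the turn-block edge
  set TB : Finset (Fin n) :=
    ((Finset.range ℓ).image fun s => w (m₀ * d + s)) ∪ ((Finset.range d).image v)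
    with hTBdef
  have hmul : ∀ a b : ℕ, a ≤ b → a * d ≤ b * d := fun a b hab =>
    Nat.mul_le_mul_right d hab
  have hstep : ∀ a : ℕ, (a + 1) * d = a * d + d := fun a => by ring
  have hstep2 : ∀ a : ℕ, (a + 2) * d = a * d + 2 * d := fun a => by ring
  by_cases hTB : c TB = col
  · -- insert the block AFTER the turn set, at position m₀ * d + ℓ
    obtain ⟨w', lo, mid, hi, hinj', hbd'⟩ :=
      insert_block n d ℓ m (m₀ * d + ℓ) hd0
        (by have := hmul m₀ m hm₀; omega) w v hinj hbd hv1 hv2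
    -- edges before the turn are unchanged
    have elow : ∀ j < m₀, pathEdge k ℓ w' j = pathEdge k ℓ w j := by
      intro j hj
      rw [pe, pe]
      apply image_congr_edge
      intro t ht
      apply lo
      have := hmul (j + 1) m₀ hj
      have := hstep j
      omega
    -- the turn edge equals TB
    have eturn : pathEdge k ℓ w' m₀ = TB := by
      rw [pe, hTBdef]
      ext x
      simp only [Finset.mem_image, Finset.mem_union, Finset.mem_range]
      constructor
      · rintro ⟨t, ht, rfl⟩
        by_cases htl : t < ℓ
        · left
          refine ⟨t, htl, ?_⟩
          rw [lo _ (by omega)]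
        · right
          refine ⟨t - ℓ, by omega, ?_⟩
          rw [mid _ (by omega) (by omega)]
          congr 1
          omega
      · rintro (⟨s, hs, rfl⟩ | ⟨s, hs, rfl⟩)
        · exact ⟨s, by omega, lo (m₀ * d + s) (by omega)⟩
        · refine ⟨ℓ + s, by omega, ?_⟩
          rw [mid _ (by omega) (by omega)]
          congr 1
          omega
    -- edges after the block are old edges shifted by one
    have ehigh : ∀ j, m₀ + 1 ≤ j → pathEdge k ℓ w' (j + 1) = pathEdge k ℓ w j := by
      intro j hj
      rw [pe, pe]
      apply image_congr_edge
      intro t ht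
      rw [hi _ (by have := hmul (m₀ + 1) j hj; have := hstep j; have := hstep m₀; omega)]
      congr 1
      have := hstep j
      omega
    refine ⟨if m₀ < m ∧ c (pathEdge k ℓ w' (m₀ + 1)) = col then m₀ + 2 else m₀ + 1,
      col, w', ?_, by rwa [hd], by rw [hd]; exact hbd', ?_, ?_⟩
    · split_ifs with hc
      · omega
      · omega
    · intro j hj
      split_ifs at hj with hc
      · rcases (by omega : j < m₀ ∨ j = m₀ ∨ j = m₀ + 1) with h' | h' | h'
        · rw [elow j h']; exact hcol1 j h'
        · rw [h', eturn]; exact hTB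
        · rw [h']; exact hc.2
      · rcases (by omega : j < m₀ ∨ j = m₀) with h' | h'
        · rw [elow j h']; exact hcol1 j h'
        · rw [h', eturn]; exact hTB
    · intro j hj hj'
      split_ifs at hj with hc
      · obtain ⟨j', rfl⟩ : ∃ j', j = j' + 1 := ⟨j - 1, by omega⟩
        rw [ehigh j' (by omega)]
        exact hcol2 j' (by omega) (by omega)
      · rcases (by omega : j = m₀ + 1 ∨ m₀ + 2 ≤ j) with h' | h'
        · subst h'
          have hmlt : m₀ < m := by omega
          have : ¬ c (pathEdge k ℓ w' (m₀ + 1)) = col := fun hcc => hc ⟨hmlt, hcc⟩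
          revert this
          cases c (pathEdge k ℓ w' (m₀ + 1)) <;> cases col <;> simp
        · obtain ⟨j', rfl⟩ : ∃ j', j = j' + 1 := ⟨j - 1, by omega⟩
          rw [ehigh j' (by omega)]
          exact hcol2 j' (by omega) (by omega)
  · -- insert the block BEFORE the turn set, at position m₀ * d
    obtain ⟨w', lo, mid, hi, hinj', hbd'⟩ :=
      insert_block n d ℓ m (m₀ * d) hd0
        (by have := hmul m₀ m hm₀; omega) w v hinj hbd hv1 hv2
    have elow : ∀ j, j + 2 ≤ m₀ → pathEdge k ℓ w' j = pathEdge k ℓ w j := by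
      intro j hj
      rw [pe, pe]
      apply image_congr_edge
      intro t ht
      apply lo
      have := hmul (j + 2) m₀ hj
      have := hstep2 j
      omega
    have eturn : pathEdge k ℓ w' m₀ = TB := by
      rw [pe, hTBdef]
      ext x
      simp only [Finset.mem_image, Finset.mem_union, Finset.mem_range]
      constructor
      · rintro ⟨t, ht, rfl⟩
        by_cases htl : t < d
        · right
          refine ⟨t, htl, ?_⟩
          rw [mid _ (by omega) (by omega)]
          congr 1
          omega
        · left
          refine ⟨t - d, by omega, ?_⟩
          rw [hi _ (by omega)]
          congr 1
          omega
      · rintro (⟨s, hs, rfl⟩ | ⟨s, hs, rfl⟩)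
        · refine ⟨d + s, by omega, ?_⟩
          rw [hi _ (by omega)]
          congr 1
          omega
        · refine ⟨s, by omega, ?_⟩
          rw [mid _ (by omega) (by omega)]
          congr 1
          omega
    have ehigh : ∀ j, m₀ ≤ j → pathEdge k ℓ w' (j + 1) = pathEdge k ℓ w j := by
      intro j hj
      rw [pe, pe]
      apply image_congr_edge
      intro t ht
      rw [hi _ (by have := hmul m₀ j hj; have := hstep j; have := hstep m₀; omega)]
      congr 1
      have := hstep j
      omega
    have hTB' : c TB = !col := by
      revert hTB; cases c TB <;> cases col <;> simp
    refine ⟨if 1 ≤ m₀ ∧ c (pathEdge k ℓ w' (m₀ - 1)) = col then m₀ else m₀ - 1,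
      col, w', ?_, by rwa [hd], by rw [hd]; exact hbd', ?_, ?_⟩
    · split_ifs with hc <;> omega
    · intro j hj
      split_ifs at hj with hc
      · rcases (by omega : j + 2 ≤ m₀ ∨ j = m₀ - 1) with h' | h'
        · rw [elow j h']; exact hcol1 j (by omega)
        · rw [h']; exact hc.2
      · rw [elow j (by omega)]; exact hcol1 j (by omega)
    · intro j hj hj'
      split_ifs at hj with hc
      · rcases (by omega : j = m₀ ∨ m₀ + 1 ≤ j) with h' | h'
        · rw [h', eturn]; exact hTB'
        · obtain ⟨j', rfl⟩ : ∃ j', j = j' + 1 := ⟨j - 1, by omega⟩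
          rw [ehigh j' (by omega)]
          exact hcol2 j' (by omega) (by omega)
      · rcases (by omega : (1 ≤ m₀ ∧ j = m₀ - 1) ∨ j = m₀ ∨ m₀ + 1 ≤ j) with h' | h' | h'
        · obtain ⟨hm1, rfl⟩ := h'
          have : ¬ c (pathEdge k ℓ w' (m₀ - 1)) = col := fun hcc => hc ⟨hm1, hcc⟩
          revert this
          cases c (pathEdge k ℓ w' (m₀ - 1)) <;> cases col <;> simp
        · rw [h', eturn]; exact hTB'
        · obtain ⟨j', rfl⟩ : ∃ j', j = j' + 1 := ⟨j - 1, by omega⟩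
          rw [ehigh j' (by omega)]
          exact hcol2 j' (by omega) (by omega)

/-- **Lemma (blue-red path).** For positive integers `ℓ, k, n` with `ℓ ≤ k/2`
and `k - ℓ` dividing `n`, every 2-edge-colouring `c` of the complete
`k`-uniform hypergraph on `n` vertices contains a blue-red `ℓ`-path `P` with
`|V(P)| = n - k + 2ℓ` (written as `n + 2ℓ - k` to avoid truncated natural
subtraction), i.e. covering all but exactly `k - 2ℓ` vertices.  The path has
`m` edges (given by the linear vertex ordering `w`) and a turning point `m₀`:
the first `m₀` edges have colour `col` and the remaining `m - m₀` edges have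
the other colour `!col`. -/
theorem exists_blue_red_path
    (ℓ k n : ℕ) (hℓ : 0 < ℓ) (hn : 0 < n) (hk : 2 * ℓ ≤ k)
    (hdvd : (k - ℓ) ∣ n) (c : Finset (Fin n) → Bool) :
    ∃ (m m₀ : ℕ) (col : Bool) (w : ℕ → Fin n),
      m₀ ≤ m ∧
      Set.InjOn w (Set.Iio (m * (k - ℓ) + ℓ)) ∧
      (∀ j < m₀, c (pathEdge k ℓ w j) = col) ∧
      (∀ j, m₀ ≤ j → j < m → c (pathEdge k ℓ w j) = !col) ∧
      ((Finset.range (m * (k - ℓ) + ℓ)).image w).card = n + 2 * ℓ - k := by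
  obtain ⟨q, hq⟩ := hdvd
  obtain ⟨q, rfl⟩ : ∃ q', q = q' + 1 := by
    refine ⟨q - 1, ?_⟩
    rcases q with _ | q
    · simp at hq; omega
    · rfl
  have hqe : n = (q + 1) * (k - ℓ) := by rw [hq]; ring
  have hd0 : 0 < k - ℓ := by omega
  have key : ∀ s, (s + 1) * (k - ℓ) ≤ n → GoodPath k ℓ n c s := by
    intro s
    induction s with
    | zero =>
      intro hs
      exact goodPath_zero ℓ k n hn (by simp at hs; omega) hk c
    | succ s ih =>
      intro hs
      refine goodPath_step ℓ k n hℓ hk c s (by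
        have : (s + 1 + 1) * (k - ℓ) = (s + 2) * (k - ℓ) := by ring
        omega) (ih ?_)
      calc (s + 1) * (k - ℓ) ≤ (s + 1 + 1) * (k - ℓ) :=
            Nat.mul_le_mul_right _ (by omega)
        _ ≤ n := hs
  obtain ⟨m₀, col, w, h1, h2, h3, h4, h5⟩ := key q (by omega)
  refine ⟨q, m₀, col, w, h1, h2, h4, h5, ?_⟩
  rw [Finset.card_image_of_injOn (h2.mono (by
    intro x hx
    simp only [Finset.coe_range, Set.mem_Iio] at hx ⊢
    exact hx)), Finset.card_range]
  have e : (q + 1) * (k - ℓ) = q * (k - ℓ) + (k - ℓ) := by ring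
  have hq' : n = (k - ℓ) * (q + 1) := hq
  have e2 : (k - ℓ) * (q + 1) = (q + 1) * (k - ℓ) := by ring
  omega
end

section
/- Let ℓ, k be positive integers with 0 < ℓ < k/2. Then every 2-edge-colouring of the complete k-uniform hypergraph K_{2(k−ℓ)}^{(k)} on 2(k−ℓ) vertices contains a monochromatic ℓ-cycle of length two, that is, two k-element edges of the same colour whose intersection has exactly 2ℓ vertices (so that their union is the whole vertex set). In other words, the 2-colour Ramsey number of the k-uniform ℓ-cycle of length two is at most 2(k−ℓ). -/
/-- **Ramsey number of the `ℓ`-cycle of length two.** For positive integers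
`ℓ, k` with `0 < ℓ < k/2`, every 2-edge-colouring `c` of the complete
`k`-uniform hypergraph on `2(k-ℓ)` vertices contains a monochromatic
`ℓ`-cycle of length two: two `k`-element edges of the same colour whose
intersection has exactly `2ℓ` vertices (so their union is the whole vertex
set). -/
theorem ramsey_two_edge_cycle
    (ℓ k : ℕ) (hℓ : 0 < ℓ) (hk : 2 * ℓ < k)
    (c : Finset (Fin (2 * (k - ℓ))) → Bool) :
    ∃ e₁ e₂ : Finset (Fin (2 * (k - ℓ))),
      e₁.card = k ∧ e₂.card = k ∧ (e₁ ∩ e₂).card = 2 * ℓ ∧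
      e₁ ∪ e₂ = Finset.univ ∧ c e₁ = c e₂ := by
  set d := k - 2 * ℓ with hd
  have hdpos : 0 < d := by omega
  have hcard : Fintype.card (Fin (2 * (k - ℓ))) = 2 * d + 2 * ℓ := by
    rw [Fintype.card_fin]; omega
  -- Key claim: there exist disjoint d-sets whose complements get the same colour.
  have key : ∃ X Y : Finset (Fin (2 * (k - ℓ))), X.card = d ∧ Y.card = d ∧ Disjoint X Y ∧
      c Xᶜ = c Yᶜ := by
    by_contra H
    push_neg at H
    -- any two d-sets have same coloured complement, by induction on |X \ Y|
    have const : ∀ m : ℕ, ∀ X Y : Finset (Fin (2 * (k - ℓ))), X.card = d → Y.card = d →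
        (X \ Y).card ≤ m → c Xᶜ = c Yᶜ := by
      intro m
      induction m with
      | zero =>
        intro X Y hX hY h0
        have hsub : X ⊆ Y := Finset.sdiff_eq_empty_iff_subset.mp
          (Finset.card_eq_zero.mp (Nat.le_zero.mp h0))
        rw [Finset.eq_of_subset_of_card_le hsub (le_of_eq (hY.trans hX.symm))]
      | succ m ih =>
        intro X Y hX hY h0
        rcases Nat.lt_or_ge (X \ Y).card (m + 1) with hlt | hge
        · exact ih X Y hX hY (by omega)
        have hXY : (X \ Y).card = m + 1 := le_antisymm h0 hge
        have hYX : (Y \ X).card = m + 1 := by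
          rw [Finset.card_sdiff_comm (hX.trans hY.symm)] at hXY; exact hXY
        obtain ⟨a, ha⟩ := Finset.card_pos.mp (by omega : 0 < (X \ Y).card)
        obtain ⟨b, hb⟩ := Finset.card_pos.mp (by omega : 0 < (Y \ X).card)
        have haX : a ∈ X := (Finset.mem_sdiff.mp ha).1
        have haY : a ∉ Y := (Finset.mem_sdiff.mp ha).2
        have hbY : b ∈ Y := (Finset.mem_sdiff.mp hb).1
        have hbX : b ∉ X := (Finset.mem_sdiff.mp hb).2
        set X' := insert b (X.erase a) with hX'
        have hX'card : X'.card = d := by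
          rw [hX', Finset.card_insert_of_notMem (fun h => hbX (Finset.mem_of_mem_erase h)),
            Finset.card_erase_of_mem haX, hX]
          omega
        have hX'sub : X' ⊆ insert b X := by
          intro x hx
          rcases Finset.mem_insert.mp hx with h | h
          · exact Finset.mem_insert.mpr (Or.inl h)
          · exact Finset.mem_insert.mpr (Or.inr (Finset.mem_of_mem_erase h))
        -- find Z disjoint from both X and X'
        have hcompl : d ≤ ((insert b X)ᶜ : Finset (Fin (2 * (k - ℓ)))).card := by
          rw [Finset.card_compl, hcard, Finset.card_insert_of_notMem hbX, hX]
          omega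
        obtain ⟨Z, hZsub, hZcard⟩ := Finset.exists_subset_card_eq hcompl
        have hZX : Disjoint X Z := by
          rw [disjoint_comm]
          exact (disjoint_compl_left.mono_left hZsub).mono_right
            (Finset.subset_insert _ _)
        have hZX' : Disjoint X' Z := by
          rw [disjoint_comm]
          exact (disjoint_compl_left.mono_left hZsub).mono_right hX'sub
        have h1 : c Xᶜ ≠ c Zᶜ := H X Z hX hZcard hZX
        have h2 : c X'ᶜ ≠ c Zᶜ := H X' Z hX'card hZcard hZX'
        have hXX' : c Xᶜ = c X'ᶜ := by
          cases hcz : c Zᶜ <;> cases hcx : c Xᶜ <;> cases hcx' : c X'ᶜ <;>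
            simp_all
        rw [hXX']
        refine ih X' Y hX'card hY ?_
        have hsub : X' \ Y ⊆ (X \ Y).erase a := by
          intro x hx
          have hx1 := Finset.mem_sdiff.mp hx
          rcases Finset.mem_insert.mp hx1.1 with h | h
          · exact absurd hbY (h ▸ hx1.2)
          · exact Finset.mem_erase.mpr ⟨Finset.ne_of_mem_erase h,
              Finset.mem_sdiff.mpr ⟨Finset.mem_of_mem_erase h, hx1.2⟩⟩
        calc (X' \ Y).card ≤ ((X \ Y).erase a).card := Finset.card_le_card hsub
          _ = m := by rw [Finset.card_erase_of_mem ha, hXY]; omega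
    -- now pick two disjoint d-sets, contradiction
    have hud : d ≤ (Finset.univ : Finset (Fin (2 * (k - ℓ)))).card := by
      rw [Finset.card_univ, hcard]; omega
    obtain ⟨X, _, hXcard⟩ := Finset.exists_subset_card_eq hud
    have hXc : d ≤ (Xᶜ : Finset (Fin (2 * (k - ℓ)))).card := by
      rw [Finset.card_compl, hcard, hXcard]; omega
    obtain ⟨Y, hYsub, hYcard⟩ := Finset.exists_subset_card_eq hXc
    have hdisj : Disjoint X Y :=
      (disjoint_compl_right.mono_right hYsub)
    exact H X Y hXcard hYcard hdisj (const ((X \ Y).card) X Y hXcard hYcard le_rfl)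
  obtain ⟨X, Y, hX, hY, hdisj, hcXY⟩ := key
  refine ⟨Xᶜ, Yᶜ, ?_, ?_, ?_, ?_, hcXY⟩
  · rw [Finset.card_compl, hcard, hX]; omega
  · rw [Finset.card_compl, hcard, hY]; omega
  · rw [← Finset.compl_union, Finset.card_compl, hcard,
      Finset.card_union_of_disjoint hdisj, hX, hY]
    omega
  · rw [← Finset.compl_inter, Finset.disjoint_iff_inter_eq_empty.mp hdisj]
    simp
end
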